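/- Let A and B be backward weighted shift operators on a separable Hilbert space H with orthonormal basis {e_i}_{i≥0}, with nonzero weight sequences {a_i} and {b_i} (i.e., A e_0 = 0, A e_{i+1} = a_i e_i, and similarly for B). If a bounded operator X satisfies XA = BX, then X is nonzero if and only if X* is injective (equivalently, X has dense range). -/

import Mathlib

open scoped InnerProductSpace ComplexConjugate

/-- Let `A`, `B` be backward weighted shifts on a separable complex Hilbert
space `H` with orthonormal basis `e`, with nonzero weight sequences `a`, `b`. If a bounded
operator `X` satisfies `X A = B X`, then `X ≠ 0` iff `X*` is injective, which is also
equivalent to `X` having dense range. -/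
theorem stmt0 {H : Type*} [NormedAddCommGroup H] [InnerProductSpace ℂ H] [CompleteSpace H]
    (e : ℕ → H) (he : Orthonormal ℂ e)
    (hdense : (Submodule.span ℂ (Set.range e)).topologicalClosure = ⊤)
    (a b : ℕ → ℂ) (ha : ∀ i, a i ≠ 0) (hb : ∀ i, b i ≠ 0)
    (A B X : H →L[ℂ] H)
    (hA0 : A (e 0) = 0) (hA : ∀ i, A (e (i + 1)) = a i • e i)
    (hB0 : B (e 0) = 0) (hB : ∀ i, B (e (i + 1)) = b i • e i)
    (hX : X ∘L A = B ∘L X) :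
    (X ≠ 0 ↔ Function.Injective (ContinuousLinearMap.adjoint X)) ∧
      (X ≠ 0 ↔ DenseRange X) := by
  classical
  set bas : HilbertBasis ℕ ℂ H := HilbertBasis.mk he hdense.ge with hbas
  have hcoe : ⇑bas = e := HilbertBasis.coe_mk he hdense.ge
  have hee : ∀ j k : ℕ, ⟪e j, e k⟫_ℂ = if j = k then 1 else 0 :=
    fun j k => orthonormal_iff_ite.mp he j k
  -- density lemma
  have hD : ∀ v : H, (∀ j, ⟪e j, v⟫_ℂ = 0) → v = 0 := by
    intro v hv
    have : bas.repr v = 0 := by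
      ext j
      rw [bas.repr_apply_apply, hcoe]
      simpa using hv j
    have := congrArg bas.repr.symm this
    simpa using this
  -- adjoint of B on the basis
  have hBadj : ∀ i, (ContinuousLinearMap.adjoint B) (e i) = conj (b i) • e (i + 1) := by
    intro i
    have key : ∀ j, ⟪e j,
        (ContinuousLinearMap.adjoint B) (e i) - conj (b i) • e (i + 1)⟫_ℂ = 0 := by
      intro j
      rw [inner_sub_right, inner_smul_right]
      have h1 : ⟪e j, (ContinuousLinearMap.adjoint B) (e i)⟫_ℂ = ⟪B (e j), e i⟫_ℂ := by
        rw [← inner_conj_symm, ContinuousLinearMap.adjoint_inner_left, inner_conj_symm]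
      cases j with
      | zero => rw [h1, hB0, inner_zero_left, hee]; simp
      | succ j' =>
        rw [h1, hB j', inner_smul_left, hee, hee]
        by_cases hji : j' = i
        · subst hji; simp
        · simp [hji]
    have := hD _ key
    rwa [sub_eq_zero] at this
  -- matrix entries
  set M : ℕ → ℕ → ℂ := fun i j => ⟪e i, X (e j)⟫_ℂ with hM
  -- the recursion
  have hrec : ∀ i j, a j * M i j = b i * M (i + 1) (j + 1) := by
    intro i j
    have h := ContinuousLinearMap.ext_iff.mp hX (e (j + 1))
    simp only [ContinuousLinearMap.comp_apply, hA j, map_smul] at h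
    have h2 : ⟪e i, a j • X (e j)⟫_ℂ = ⟪e i, B (X (e (j + 1)))⟫_ℂ := by rw [h]
    rw [inner_smul_right] at h2
    rw [← ContinuousLinearMap.adjoint_inner_left B, hBadj i, inner_smul_left] at h2
    simpa [hM] using h2
  -- column zero vanishes below the diagonal
  have hcol0 : ∀ i, M (i + 1) 0 = 0 := by
    intro i
    have h := ContinuousLinearMap.ext_iff.mp hX (e 0)
    simp only [ContinuousLinearMap.comp_apply, hA0, map_zero] at h
    have h2 : (0 : ℂ) = ⟪e i, B (X (e 0))⟫_ℂ := by rw [← h]; simp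
    rw [← ContinuousLinearMap.adjoint_inner_left B, hBadj i, inner_smul_left] at h2
    have : b i * M (i + 1) 0 = 0 := by simpa [hM] using h2.symm
    exact (mul_eq_zero.mp this).resolve_left (hb i)
  -- strictly lower-triangular part vanishes
  have hlow : ∀ j i, j < i → M i j = 0 := by
    intro j
    induction j with
    | zero =>
      intro i hi
      obtain ⟨i', rfl⟩ := Nat.exists_eq_add_of_lt hi
      exact hcol0 (0 + i')
    | succ j ih =>
      intro i hi
      obtain ⟨i', rfl⟩ := Nat.exists_eq_add_of_lt hi
      have h := hrec (j + 1 + i') j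
      rw [ih (j + 1 + i') (by omega)] at h
      have h2 : b (j + 1 + i') * M (j + 1 + i' + 1) (j + 1) = 0 := by linear_combination -h
      exact (mul_eq_zero.mp h2).resolve_left (hb _)
  -- entries in terms of the first row
  have hform : ∀ i n, ∃ t : ℂ, t ≠ 0 ∧ M i (n + i) = t * M 0 n := by
    intro i
    induction i with
    | zero => exact fun n => ⟨1, one_ne_zero, by simp⟩
    | succ i ih =>
      intro n
      obtain ⟨t, ht, hmt⟩ := ih n
      have h := hrec i (n + i)
      refine ⟨a (n + i) * t / b i, by
        simp [ha, hb, ht], ?_⟩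
      have hb' := hb i
      have : M (i + 1) (n + (i + 1)) = a (n + i) / b i * M i (n + i) := by
        have hni : n + (i + 1) = n + i + 1 := by omega
        rw [hni]
        field_simp
        linear_combination -h
      rw [this, hmt]
      field_simp
  -- main implication : X ≠ 0 → adjoint injective
  have h1 : X ≠ 0 → Function.Injective (ContinuousLinearMap.adjoint X) := by
    intro hX0
    -- some entry is nonzero
    have hex : ∃ n, M 0 n ≠ 0 := by
      by_contra hc
      push_neg at hc
      have hall : ∀ i j, M i j = 0 := by
        intro i j
        rcases lt_or_ge j i with h | h
        · exact hlow j i h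
        · obtain ⟨n, rfl⟩ : ∃ n, j = n + i := ⟨j - i, by omega⟩
          obtain ⟨t, ht, hmt⟩ := hform i n
          rw [hmt, hc n, mul_zero]
      apply hX0
      have hXe : ∀ j, X (e j) = 0 := fun j => hD _ (fun i => hall i j)
      have hker : (⊤ : Submodule ℂ H) ≤ LinearMap.ker (X : H →ₗ[ℂ] H) := by
        rw [← hdense]
        have hle : Submodule.span ℂ (Set.range e) ≤ LinearMap.ker (X : H →ₗ[ℂ] H) := by
          rw [Submodule.span_le]
          rintro _ ⟨j, rfl⟩
          exact hXe j
        exact Submodule.topologicalClosure_minimal _ hle (ContinuousLinearMap.isClosed_ker X)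
      ext v
      exact hker (Submodule.mem_top (x := v))
    set k := Nat.find hex with hk
    have hck : M 0 k ≠ 0 := Nat.find_spec hex
    have hcmin : ∀ m, m < k → M 0 m = 0 := fun m hm => by
      simpa using Nat.find_min hex hm
    -- injectivity
    have hker : ∀ y, (ContinuousLinearMap.adjoint X) y = 0 → y = 0 := by
      intro y hy
      have hyX : ∀ j, ⟪y, X (e j)⟫_ℂ = 0 := by
        intro j
        rw [← ContinuousLinearMap.adjoint_inner_left X, hy, inner_zero_left]
      have hsum : ∀ j, ∑' i, ⟪y, e i⟫_ℂ * M i j = 0 := by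
        intro j
        have := bas.tsum_inner_mul_inner y (X (e j))
        rw [hcoe] at this
        rw [this, hyX j]
      have heta : ∀ m, ⟪y, e m⟫_ℂ = 0 := by
        intro m
        induction m using Nat.strong_induction_on with
        | _ m ih =>
          have hxm : ∃ t : ℂ, t ≠ 0 ∧ M m (k + m) = t * M 0 k := hform m k
          obtain ⟨t, ht, hmt⟩ := hxm
          have hz : ∀ i, i ≠ m → ⟪y, e i⟫_ℂ * M i (k + m) = 0 := by
            intro i hi
            rcases lt_or_gt_of_ne hi with h | h
            · rw [ih i h, zero_mul]
            · have : M i (k + m) = 0 := by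
                rcases lt_or_ge (k + m) i with h2 | h2
                · exact hlow _ _ h2
                · obtain ⟨n, hn⟩ : ∃ n, k + m = n + i := ⟨k + m - i, by omega⟩
                  obtain ⟨t', ht', hmt'⟩ := hform i n
                  rw [hn, hmt', hcmin n (by omega), mul_zero]
              rw [this, mul_zero]
          have := hsum (k + m)
          rw [tsum_eq_single m hz] at this
          rw [hmt] at this
          rcases mul_eq_zero.mp this with h | h
          · exact h
          · exact absurd h (mul_ne_zero ht hck)
      apply hD
      intro j
      rw [← inner_conj_symm, heta j, map_zero]
    intro y1 y2 hy
    have := hker (y1 - y2) (by rw [map_sub, hy, sub_self])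
    exact sub_eq_zero.mp this
  -- adjoint injective → dense range
  have h2 : Function.Injective (ContinuousLinearMap.adjoint X) → DenseRange X := by
    intro hinj
    have hT : (LinearMap.range (X : H →ₗ[ℂ] H)).topologicalClosure = ⊤ := by
      rw [Submodule.topologicalClosure_eq_top_iff, Submodule.eq_bot_iff]
      intro y hy
      have h := (Submodule.mem_orthogonal _ y).mp hy
      have h0 : ⟪X ((ContinuousLinearMap.adjoint X) y), y⟫_ℂ = 0 :=
        h _ (LinearMap.mem_range_self _ _)
      rw [← ContinuousLinearMap.adjoint_inner_right, inner_self_eq_zero] at h0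
      exact hinj (by rw [h0, map_zero])
    have : closure (Set.range ⇑X) = Set.univ := by
      have := congrArg (fun K : Submodule ℂ H => (K : Set H)) hT
      simpa [Submodule.topologicalClosure_coe, LinearMap.coe_range, ContinuousLinearMap.coe_coe] using this
    rw [DenseRange, dense_iff_closure_eq, this]
  -- dense range → X ≠ 0
  have h3 : DenseRange X → X ≠ 0 := by
    intro hd h0
    rw [h0] at hd
    have h1' : e 0 ∈ closure (Set.range ⇑(0 : H →L[ℂ] H)) := hd (e 0)
    have h2' : Set.range ⇑(0 : H →L[ℂ] H) = {0} := by
      ext z; simp [eq_comm]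
    rw [h2', closure_singleton, Set.mem_singleton_iff] at h1'
    have := he.1 0
    rw [h1'] at this
    simp at this
  exact ⟨⟨h1, fun hi => h3 (h2 hi)⟩, ⟨fun h => h2 (h1 h), h3⟩⟩
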